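/- Let Z_1, ..., Z_{n+1} be exchangeable, almost surely distinct real-valued random variables and let Q̂_n denote the empirical quantile of the first n. Then for any α ∈ (0,1), P(Z_{n+1} ≤ Q̂_n((1 + 1/n)α)) ≤ α + 1/(n+1). -/

import Mathlib

open MeasureTheory
open scoped ENNReal

/-- Empirical `a`-quantile of `z₁,…,z_m`, valued in `EReal` (`⊤` if `⌈m·a⌉ > m`). -/
noncomputable def empQuantile (m : ℕ) (z : Fin m → ℝ) (a : ℝ) : EReal :=
  sInf {q : EReal | a ≤ ((Finset.univ.filter (fun i => (z i : EReal) ≤ q)).card : ℝ) / m}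

lemma card_filter_comp_perm {m : ℕ} (σ : Equiv.Perm (Fin m)) (P : Fin m → Prop) [DecidablePred P] :
    (Finset.univ.filter (fun l => P (σ l))).card = (Finset.univ.filter P).card := by
  apply Finset.card_bij (fun l _ => σ l)
  · intro a ha
    simpa using (Finset.mem_filter.mp ha).2
  · intro a _ b _ h
    exact σ.injective h
  · intro b hb
    exact ⟨σ.symm b, by simpa using (Finset.mem_filter.mp hb).2, by simp⟩

lemma count_rank_le {m k : ℕ} (v : Fin m → ℝ) (hv : Function.Injective v) :
    (Finset.univ.filter
      (fun i => (Finset.univ.filter (fun l => v l ≤ v i)).card ≤ k)).card = min k m := by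
  set R : Fin m → ℕ := fun i => (Finset.univ.filter (fun l => v l ≤ v i)).card with hR
  have hmono : ∀ i j, v i < v j → R i < R j := by
    intro i j hij
    apply Finset.card_lt_card
    rw [Finset.ssubset_iff_of_subset]
    · exact ⟨j, Finset.mem_filter.mpr ⟨Finset.mem_univ _, le_refl _⟩,
        fun h => absurd (Finset.mem_filter.mp h).2 (not_le.mpr hij)⟩
    · intro l hl
      exact Finset.mem_filter.mpr ⟨Finset.mem_univ _, ((Finset.mem_filter.mp hl).2).trans hij.le⟩
  have hinj : Function.Injective R := by
    intro i j h
    by_contra hne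
    rcases lt_or_gt_of_ne (fun hv' : v i = v j => hne (hv hv')) with h' | h'
    · exact absurd h (Nat.ne_of_lt (hmono i j h'))
    · exact absurd h.symm (Nat.ne_of_lt (hmono j i h'))
  have himg : Finset.image R Finset.univ = Finset.Icc 1 m := by
    apply Finset.eq_of_subset_of_card_le
    · intro r hr
      obtain ⟨i, _, rfl⟩ := Finset.mem_image.mp hr
      refine Finset.mem_Icc.mpr ⟨?_, ?_⟩
      · exact Finset.card_pos.mpr ⟨i, Finset.mem_filter.mpr ⟨Finset.mem_univ _, le_refl _⟩⟩
      · simpa using Finset.card_filter_le Finset.univ (fun l => v l ≤ v i)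
    · rw [Finset.card_image_of_injective _ hinj]
      simp [Nat.card_Icc]
  have key : (Finset.univ.filter (fun i => R i ≤ k)).card
      = ((Finset.Icc 1 m).filter (fun r => r ≤ k)).card := by
    rw [← himg, Finset.filter_image,
      Finset.card_image_of_injective _ hinj]
  rw [key, show (Finset.Icc 1 m).filter (fun r => r ≤ k) = Finset.Icc 1 (min k m) by
    ext x; simp only [Finset.mem_filter, Finset.mem_Icc]; omega]
  rw [Nat.card_Icc]; omega

lemma measurable_rank_set {m : ℕ} (i : Fin m) (k : ℕ) :
    MeasurableSet {v : Fin m → ℝ | (Finset.univ.filter (fun l => v l ≤ v i)).card ≤ k} := by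
  have h : Measurable fun v : Fin m → ℝ =>
      ((Finset.univ.filter (fun l => v l ≤ v i)).card) := by
    simp only [Finset.card_filter]
    exact Finset.measurable_sum _ fun l _ =>
      Measurable.ite (measurableSet_le (measurable_pi_apply l) (measurable_pi_apply i))
        measurable_const measurable_const
  exact h measurableSet_Iic

lemma coe_le_empQuantile_iff {n : ℕ} (hn : 0 < n) (z : Fin n → ℝ) (x : ℝ) (a : ℝ)
    (ha : 0 < a) (hd : ∀ i, z i ≠ x) :
    ((x : EReal) ≤ empQuantile n z a ↔
      (Finset.univ.filter (fun i => z i ≤ x)).card + 1 ≤ ⌈(n : ℝ) * a⌉₊) := by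
  have hn' : (0 : ℝ) < n := Nat.cast_pos.mpr hn
  set k := ⌈(n : ℝ) * a⌉₊ with hkdef
  have hk1 : 1 ≤ k := Nat.ceil_pos.mpr (by positivity)
  have hmem : ∀ q : EReal,
      (q ∈ {q : EReal | a ≤ ((Finset.univ.filter (fun i => (z i : EReal) ≤ q)).card : ℝ) / n}
        ↔ k ≤ (Finset.univ.filter (fun i => (z i : EReal) ≤ q)).card) := by
    intro q
    rw [Set.mem_setOf_eq, le_div_iff₀ hn', mul_comm]
    exact (Nat.ceil_le).symm
  constructor
  · intro h
    by_contra hc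
    push_neg at hc
    have hc' : k ≤ (Finset.univ.filter (fun i => z i ≤ x)).card := by omega
    have hne : (Finset.univ.filter (fun i => z i ≤ x)).Nonempty := by
      rw [← Finset.card_pos]; omega
    have hne' : ((Finset.univ.filter (fun i => z i ≤ x)).image z).Nonempty :=
      hne.image z
    set y := ((Finset.univ.filter (fun i => z i ≤ x)).image z).max' hne' with hy
    have hylt : y < x := by
      obtain ⟨i, hi, hiy⟩ := Finset.mem_image.mp (Finset.max'_mem _ hne')
      have := (Finset.mem_filter.mp hi).2
      rw [hy, ← hiy]
      exact lt_of_le_of_ne this (hd i)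
    have hyS : ((y : EReal)) ∈ {q : EReal |
        a ≤ ((Finset.univ.filter (fun i => (z i : EReal) ≤ q)).card : ℝ) / n} := by
      rw [hmem]
      refine hc'.trans (Finset.card_le_card ?_)
      intro i hi
      have hzi := (Finset.mem_filter.mp hi).2
      refine Finset.mem_filter.mpr ⟨Finset.mem_univ _, ?_⟩
      exact_mod_cast Finset.le_max' _ _ (Finset.mem_image_of_mem z hi)
    have := le_trans h (sInf_le hyS)
    exact absurd (EReal.coe_le_coe_iff.mp this) (not_le.mpr hylt)
  · intro h
    apply le_sInf
    intro q hq
    rw [hmem] at hq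
    by_contra hlt
    push_neg at hlt
    have hsub : (Finset.univ.filter (fun i => (z i : EReal) ≤ q))
        ⊆ (Finset.univ.filter (fun i => z i ≤ x)) := by
      intro i hi
      have hzi := (Finset.mem_filter.mp hi).2
      refine Finset.mem_filter.mpr ⟨Finset.mem_univ _, ?_⟩
      have : (z i : EReal) < (x : EReal) := lt_of_le_of_lt hzi hlt
      exact (EReal.coe_lt_coe_iff.mp this).le
    have := (hq.trans (Finset.card_le_card hsub))
    omega

/-- **Quantile inflation, upper bound.** If `Z₁,…,Z_{n+1}` are exchangeable and almost
surely distinct, then `P(Z_{n+1} ≤ Q̂_n((1 + 1/n)α)) ≤ α + 1/(n+1)`, where `Q̂_n` is the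
empirical quantile of the first `n` variables. -/
theorem quantile_inflation_upper {Ω : Type*} [MeasurableSpace Ω]
    (μ : Measure Ω) [IsProbabilityMeasure μ] (n : ℕ) (hn : 0 < n)
    (Z : Fin (n + 1) → Ω → ℝ) (hZ : ∀ i, Measurable (Z i))
    (hexch : ∀ σ : Equiv.Perm (Fin (n + 1)),
      Measure.map (fun ω i => Z (σ i) ω) μ = Measure.map (fun ω i => Z i ω) μ)
    (hdist : ∀ i j : Fin (n + 1), i ≠ j → μ {ω | Z i ω = Z j ω} = 0)
    (α : ℝ) (hα : α ∈ Set.Ioo (0 : ℝ) 1) :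
    μ {ω | (Z (Fin.last n) ω : EReal) ≤
        empQuantile n (fun i : Fin n => Z i.castSucc ω) ((1 + 1 / n) * α)} ≤
      ENNReal.ofReal (α + 1 / (n + 1)) := by
  obtain ⟨hα0, hα1⟩ := hα
  have hn' : (0 : ℝ) < n := Nat.cast_pos.mpr hn
  set a : ℝ := (1 + 1 / n) * α with hadef
  have hapos : 0 < a := by positivity
  have hna : (n : ℝ) * a = ((n : ℝ) + 1) * α := by
    rw [hadef, ← mul_assoc, mul_add, mul_one, mul_one_div_cancel hn'.ne']
  set k : ℕ := ⌈(n : ℝ) * a⌉₊ with hkdef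
  set E : Fin (n + 1) → Set Ω := fun i =>
    {ω | (Finset.univ.filter (fun l => Z l ω ≤ Z i ω)).card ≤ k} with hEdef
  have hmeasmap : Measurable (fun ω => fun l : Fin (n + 1) => Z l ω) :=
    measurable_pi_lambda _ hZ
  have hE_meas : ∀ i, MeasurableSet (E i) := fun i => hmeasmap (measurable_rank_set i k)
  -- a.e. all coordinates distinct
  have hDae : ∀ᵐ ω ∂μ, ∀ i j : Fin (n + 1), i ≠ j → Z i ω ≠ Z j ω := by
    rw [ae_all_iff]
    intro i
    rw [ae_all_iff]
    intro j
    by_cases hij : i = j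
    · exact Filter.Eventually.of_forall fun ω h => absurd hij h
    · have h0 : ∀ᵐ ω ∂μ, Z i ω ≠ Z j ω := by
        rw [ae_iff]
        simpa using hdist i j hij
      exact h0.mono fun ω h _ => h
  -- the event coincides a.e. with E (last)
  have hae : {ω | (Z (Fin.last n) ω : EReal) ≤
      empQuantile n (fun i : Fin n => Z i.castSucc ω) a} =ᵐ[μ] E (Fin.last n) := by
    rw [Filter.eventuallyEq_set]
    filter_upwards [hDae] with ω hω
    have hd' : ∀ i : Fin n, Z i.castSucc ω ≠ Z (Fin.last n) ω :=
      fun i => hω _ _ (Fin.castSucc_lt_last i).ne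
    rw [Set.mem_setOf_eq, coe_le_empQuantile_iff hn _ _ _ hapos hd']
    have hcard : (Finset.univ.filter (fun l : Fin (n + 1) => Z l ω ≤ Z (Fin.last n) ω)).card
        = (Finset.univ.filter (fun i : Fin n => Z i.castSucc ω ≤ Z (Fin.last n) ω)).card + 1 := by
      rw [Finset.card_filter, Finset.card_filter, Fin.sum_univ_castSucc]
      simp
    show _ ↔ ω ∈ E (Fin.last n)
    simp only [hEdef, Set.mem_setOf_eq, hcard, hkdef]
  -- exchangeability: all μ (E i) agree
  have hEeq : ∀ i, μ (E i) = μ (E (Fin.last n)) := by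
    intro i
    have h1 : Measurable (fun ω => fun l : Fin (n + 1) =>
        Z (Equiv.swap (Fin.last n) i l) ω) :=
      measurable_pi_lambda _ (fun l => hZ _)
    have h2 := congrArg (fun ν : Measure (Fin (n + 1) → ℝ) =>
      ν {v | (Finset.univ.filter (fun l => v l ≤ v (Fin.last n))).card ≤ k})
      (hexch (Equiv.swap (Fin.last n) i))
    rw [Measure.map_apply h1 (measurable_rank_set _ k),
      Measure.map_apply hmeasmap (measurable_rank_set _ k)] at h2
    have hpre : (fun ω => fun l : Fin (n + 1) => Z (Equiv.swap (Fin.last n) i l) ω) ⁻¹'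
        {v | (Finset.univ.filter (fun l => v l ≤ v (Fin.last n))).card ≤ k} = E i := by
      ext ω
      simp only [Set.mem_preimage, Set.mem_setOf_eq, hEdef, Equiv.swap_apply_left]
      rw [card_filter_comp_perm (Equiv.swap (Fin.last n) i) (fun l => Z l ω ≤ Z i ω)]
    rw [hpre] at h2
    exact h2
  -- summing the indicators
  have hcount : ∀ᵐ ω ∂μ, ∑ i : Fin (n + 1), (E i).indicator (1 : Ω → ℝ≥0∞) ω
      = ((min k (n + 1) : ℕ) : ℝ≥0∞) := by
    filter_upwards [hDae] with ω hω
    have hinj : Function.Injective (fun l : Fin (n + 1) => Z l ω) := by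
      intro i j h
      by_contra hne
      exact hω i j hne h
    have h1 := count_rank_le (k := k) (fun l => Z l ω) hinj
    calc ∑ i : Fin (n + 1), (E i).indicator (1 : Ω → ℝ≥0∞) ω
        = ∑ i : Fin (n + 1),
            (if (Finset.univ.filter (fun l => Z l ω ≤ Z i ω)).card ≤ k then (1 : ℝ≥0∞) else 0) := by
          refine Finset.sum_congr rfl fun i _ => ?_
          by_cases h : (Finset.univ.filter (fun l => Z l ω ≤ Z i ω)).card ≤ k
          · simp [hEdef, Set.indicator_apply, h]
          · simp [hEdef, Set.indicator_apply, h]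
      _ = (((Finset.univ.filter (fun i : Fin (n + 1) =>
            (Finset.univ.filter (fun l => Z l ω ≤ Z i ω)).card ≤ k)).card : ℕ) : ℝ≥0∞) := by
          rw [Finset.card_filter]
          push_cast
          rfl
      _ = ((min k (n + 1) : ℕ) : ℝ≥0∞) := by rw [h1]
  have hsum : ∑ i : Fin (n + 1), μ (E i) = ((min k (n + 1) : ℕ) : ℝ≥0∞) := by
    have h0 : ∀ i : Fin (n + 1), μ (E i) = ∫⁻ ω, (E i).indicator (1 : Ω → ℝ≥0∞) ω ∂μ :=
      fun i => (lintegral_indicator_one (hE_meas i)).symm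
    rw [Finset.sum_congr rfl (fun i _ => h0 i),
      ← lintegral_finset_sum _ (fun i _ => measurable_one.indicator (hE_meas i)),
      lintegral_congr_ae hcount, lintegral_const, measure_univ, mul_one]
  have hconst : ∑ i : Fin (n + 1), μ (E i) = ((n : ℝ≥0∞) + 1) * μ (E (Fin.last n)) := by
    rw [Finset.sum_congr rfl (fun i _ => hEeq i), Finset.sum_const, Finset.card_univ,
      Fintype.card_fin, nsmul_eq_mul]
    push_cast
    ring
  have hkey : ((n : ℝ≥0∞) + 1) * μ (E (Fin.last n)) = ((min k (n + 1) : ℕ) : ℝ≥0∞) := by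
    rw [← hconst, hsum]
  rw [measure_congr hae]
  rw [← ENNReal.mul_le_mul_iff_right (a := (n : ℝ≥0∞) + 1) (by simp) (by simp), hkey]
  have hofr : ((n : ℝ≥0∞) + 1) * ENNReal.ofReal (α + 1 / (n + 1))
      = ENNReal.ofReal (((n : ℝ) + 1) * (α + 1 / (n + 1))) := by
    rw [ENNReal.ofReal_mul (by positivity)]
    congr 1
    rw [show ((n : ℝ) + 1) = ((n + 1 : ℕ) : ℝ) by push_cast; ring, ENNReal.ofReal_natCast]
    push_cast
    ring
  rw [hofr, show ((min k (n + 1) : ℕ) : ℝ≥0∞) = ENNReal.ofReal ((min k (n + 1) : ℕ) : ℝ)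
    from (ENNReal.ofReal_natCast _).symm]
  apply ENNReal.ofReal_le_ofReal
  have h1 : ((min k (n + 1) : ℕ) : ℝ) ≤ (k : ℝ) := Nat.cast_le.mpr (min_le_left _ _)
  have h2 : (k : ℝ) < (n : ℝ) * a + 1 := Nat.ceil_lt_add_one (by positivity)
  have h3 : (n : ℝ) * a + 1 = ((n : ℝ) + 1) * (α + 1 / (n + 1)) := by
    rw [hna]
    field_simp
  linarith
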